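/- Let M = AW be a stable nonnegative matrix factorization with rank(A) = s, let U be a set of s linearly independent rows of A, and define B_S as the r×s matrix that is zero outside rows S and equals (A^U_S)⁻¹ on rows S, for each set S of s linearly independent columns of A. Then among all vectors of the form B_S Mᵢ^U that are entrywise nonnegative, Wᵢ is the unique one whose support is minimal in the order (cardinality first, then lexicographic). -/

import Mathlib

open scoped Classical

/-- A subset `S` of column indices of `A` is admissible for a vector `v` if `v` lies in
the conical hull of the columns of `A` indexed by `S`. -/
def Admissible {m r : ℕ} (A : Matrix (Fin m) (Fin r) ℝ) (v : Fin m → ℝ)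
    (S : Finset (Fin r)) : Prop :=
  ∃ α : Fin r → ℝ, (∀ k, 0 ≤ α k) ∧ (∀ k, k ∉ S → α k = 0) ∧
    ∀ j, v j = ∑ k : Fin r, α k * A j k

/-- Encoding of a subset of `Fin r` giving larger weight to smaller indices, so that
among subsets of equal cardinality, lexicographically earlier subsets get larger codes. -/
def subsetCode {r : ℕ} (S : Finset (Fin r)) : ℕ := ∑ i ∈ S, 2 ^ (r - 1 - (i : ℕ))

/-- The order on subsets of `[r]`: smaller cardinality first, ties broken
lexicographically (as increasing sequences of indices). -/
def SubsetLt {r : ℕ} (S T : Finset (Fin r)) : Prop :=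
  S.card < T.card ∨ (S.card = T.card ∧ subsetCode T < subsetCode S)

/-- `S` is the (lexicographically) first admissible subset for `v`. -/
def IsFirstAdmissible {m r : ℕ} (A : Matrix (Fin m) (Fin r) ℝ) (v : Fin m → ℝ)
    (S : Finset (Fin r)) : Prop :=
  Admissible A v S ∧ ∀ T, Admissible A v T → T ≠ S → SubsetLt S T

/-- A nonnegative matrix factorization `M = A * W` is stable if every column of `W` is
supported in the first admissible subset of columns of `A` for the corresponding column
of `M`, and every row of `A` is supported in the first admissible subset of rows of `W`
for the corresponding row of `M`. -/
def Stable {m n r : ℕ} (M : Matrix (Fin m) (Fin n) ℝ)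
    (A : Matrix (Fin m) (Fin r) ℝ) (W : Matrix (Fin r) (Fin n) ℝ) : Prop :=
  (∀ i : Fin n, ∃ S : Finset (Fin r),
      IsFirstAdmissible A (fun j => M j i) S ∧ ∀ k, W k i ≠ 0 → k ∈ S) ∧
  (∀ j : Fin m, ∃ T : Finset (Fin r),
      IsFirstAdmissible W.transpose (fun i => M j i) T ∧ ∀ k, A j k ≠ 0 → k ∈ T)


open Matrix

lemma rowU_span {m r s : ℕ} (A : Matrix (Fin m) (Fin r) ℝ) (hrank : A.rank = s)
    (U : Fin s → Fin m)
    (hUindep : LinearIndependent ℝ (fun u : Fin s => fun k : Fin r => A (U u) k))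
    (x : Fin r → ℝ) (hx : ∀ u, ∑ k : Fin r, A (U u) k * x k = 0) :
    ∀ j, ∑ k : Fin r, A j k * x k = 0 := by
  have h1 : Module.finrank ℝ (Submodule.span ℝ (Set.range A)) = s := by
    exact (Matrix.rank_eq_finrank_span_row A).symm.trans hrank
  have h2 : Module.finrank ℝ (Submodule.span ℝ (Set.range fun u : Fin s => A (U u))) = s := by
    rw [finrank_span_eq_card hUindep, Fintype.card_fin]
  have hle : Submodule.span ℝ (Set.range fun u : Fin s => A (U u)) ≤
      Submodule.span ℝ (Set.range A) :=
    Submodule.span_mono (by rintro _ ⟨u, rfl⟩; exact ⟨U u, rfl⟩)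
  have heq := Submodule.eq_of_le_of_finrank_le hle (by rw [h1, h2])
  intro j
  have hj : A j ∈ Submodule.span ℝ (Set.range fun u : Fin s => A (U u)) := by
    rw [heq]; exact Submodule.subset_span ⟨j, rfl⟩
  rw [Submodule.mem_span_range_iff_exists_fun] at hj
  obtain ⟨c, hc⟩ := hj
  have hAj : ∀ k, A j k = ∑ u, c u * A (U u) k := by
    intro k; rw [← hc]; simp [Finset.sum_apply]
  calc ∑ k : Fin r, A j k * x k = ∑ k : Fin r, ∑ u, c u * A (U u) k * x k := by
        simp_rw [hAj, Finset.sum_mul]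
    _ = ∑ u, c u * ∑ k : Fin r, A (U u) k * x k := by
        rw [Finset.sum_comm]; simp_rw [Finset.mul_sum, mul_assoc]
    _ = 0 := by simp [hx]

lemma det_sub_unit {m r s : ℕ} (A : Matrix (Fin m) (Fin r) ℝ) (hrank : A.rank = s)
    (U : Fin s → Fin m)
    (hUindep : LinearIndependent ℝ (fun u : Fin s => fun k : Fin r => A (U u) k))
    (σ : Fin s → Fin r)
    (hσindep : LinearIndependent ℝ (fun t : Fin s => fun j : Fin m => A j (σ t))) :
    IsUnit (A.submatrix U σ).det := by
  rw [isUnit_iff_ne_zero]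
  intro hdet
  obtain ⟨c, hc0, hc⟩ := (Matrix.exists_mulVec_eq_zero_iff).2 hdet
  set x : Fin r → ℝ := fun k => ∑ t, if σ t = k then c t else 0 with hxdef
  have key : ∀ j, ∑ k : Fin r, A j k * x k = ∑ t, A j (σ t) * c t := by
    intro j
    simp_rw [hxdef, Finset.mul_sum, mul_ite, mul_zero]
    rw [Finset.sum_comm]
    refine Finset.sum_congr rfl fun t _ => ?_
    rw [Finset.sum_ite_eq Finset.univ (σ t) (fun k => A j k * c t)]
    simp
  have hker : ∀ u, ∑ t, A (U u) (σ t) * c t = 0 := by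
    intro u
    have := congrFun hc u
    simpa [Matrix.mulVec, dotProduct, Matrix.submatrix_apply] using this
  have hall : ∀ j, ∑ t, A j (σ t) * c t = 0 := by
    intro j
    rw [← key]
    exact rowU_span A hrank U hUindep x (fun u => by rw [key]; exact hker u) j
  have : ∀ t, c t = 0 := by
    have h := Fintype.linearIndependent_iff.1 hσindep c ?_
    · exact h
    · funext j
      simp only [Finset.sum_apply, Pi.smul_apply, smul_eq_mul, Pi.zero_apply]
      rw [← hall j]
      exact Finset.sum_congr rfl fun t _ => mul_comm _ _
  exact hc0 (funext this)

lemma sum_inj_supp {r s : ℕ} (σ : Fin s → Fin r) (hσ : Function.Injective σ)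
    (f x : Fin r → ℝ) (hx : ∀ k, (∀ t, σ t ≠ k) → x k = 0) :
    ∑ k : Fin r, f k * x k = ∑ t : Fin s, f (σ t) * x (σ t) := by
  have h1 : ∑ k ∈ Finset.univ.image σ, f k * x k = ∑ t : Fin s, f (σ t) * x (σ t) :=
    Finset.sum_image (fun a _ b _ h => hσ h)
  rw [← h1]
  exact (Finset.sum_subset (Finset.subset_univ _) fun k _ hk => by
    rw [hx k fun t h => hk (Finset.mem_image.2 ⟨t, Finset.mem_univ t, h⟩), mul_zero]).symm

-- if T ⊆ S and S is first admissible and T admissible then T = S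
lemma first_eq_of_subset {m r : ℕ} {A : Matrix (Fin m) (Fin r) ℝ} {v : Fin m → ℝ}
    {S T : Finset (Fin r)} (hS : IsFirstAdmissible A v S) (hT : Admissible A v T)
    (hsub : T ⊆ S) : T = S := by
  by_contra hne
  rcases hS.2 T hT hne with h | ⟨hcard, _⟩
  · exact absurd (Finset.card_le_card hsub) (not_le.2 h)
  · exact hne (Finset.eq_of_subset_of_card_le hsub hcard.le)

lemma supp_first {m n r : ℕ} {M : Matrix (Fin m) (Fin n) ℝ}
    {A : Matrix (Fin m) (Fin r) ℝ} {W : Matrix (Fin r) (Fin n) ℝ}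
    (hW : ∀ k j, 0 ≤ W k j) (hfac : M = A * W)
    {i : Fin n} {S₀ : Finset (Fin r)}
    (hS₀ : IsFirstAdmissible A (fun j => M j i) S₀ ∧ ∀ k, W k i ≠ 0 → k ∈ S₀) :
    IsFirstAdmissible A (fun j => M j i) (Finset.univ.filter fun k => W k i ≠ 0) := by
  set Sw := Finset.univ.filter fun k => W k i ≠ 0 with hSw
  have hadm : Admissible A (fun j => M j i) Sw := by
    refine ⟨fun k => W k i, fun k => hW k i, fun k hk => ?_, fun j => ?_⟩
    · by_contra h; exact hk (Finset.mem_filter.2 ⟨Finset.mem_univ k, h⟩)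
    · rw [hfac]
      simp only [Matrix.mul_apply]
      exact Finset.sum_congr rfl fun k _ => mul_comm _ _
  have hsub : Sw ⊆ S₀ := fun k hk => hS₀.2 k (Finset.mem_filter.1 hk).2
  rw [first_eq_of_subset hS₀.1 hadm hsub]
  exact hS₀.1

lemma supp_indep {m n r : ℕ} {M : Matrix (Fin m) (Fin n) ℝ}
    {A : Matrix (Fin m) (Fin r) ℝ} {W : Matrix (Fin r) (Fin n) ℝ}
    (hW : ∀ k j, 0 ≤ W k j) (hfac : M = A * W) {i : Fin n}
    (hfirst : IsFirstAdmissible A (fun j => M j i) (Finset.univ.filter fun k => W k i ≠ 0))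
    (g : Fin r → ℝ) (hgsupp : ∀ k, W k i = 0 → g k = 0)
    (hgsum : ∀ j, ∑ k : Fin r, g k * A j k = 0) : g = 0 := by
  set Sw := Finset.univ.filter fun k => W k i ≠ 0 with hSw
  by_contra hg
  obtain ⟨k₀, hk₀⟩ : ∃ k, g k ≠ 0 := by
    by_contra h; push_neg at h; exact hg (funext h)
  -- wlog: make g positive somewhere
  set g₁ : Fin r → ℝ := if 0 < g k₀ then g else -g with hg₁
  have hg₁supp : ∀ k, W k i = 0 → g₁ k = 0 := by
    intro k hk; rw [hg₁]; split <;> simp [hgsupp k hk]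
  have hg₁sum : ∀ j, ∑ k : Fin r, g₁ k * A j k = 0 := by
    intro j; rw [hg₁]; split
    · exact hgsum j
    · simp only [Pi.neg_apply, neg_mul]
      rw [Finset.sum_neg_distrib, hgsum j, neg_zero]
  have hk₀pos : 0 < g₁ k₀ := by
    rw [hg₁]; split
    · assumption
    · simp only [Pi.neg_apply]; rcases hk₀.lt_or_gt with h | h <;> [linarith; linarith]
  have hk₀Sw : k₀ ∈ Sw := by
    rw [hSw, Finset.mem_filter]
    refine ⟨Finset.mem_univ _, fun h => ?_⟩
    rw [hg₁supp k₀ h] at hk₀pos; exact lt_irrefl _ hk₀pos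
  set P := Sw.filter (fun k => 0 < g₁ k) with hP
  have hPne : P.Nonempty := ⟨k₀, Finset.mem_filter.2 ⟨hk₀Sw, hk₀pos⟩⟩
  obtain ⟨ks, hksP, hksmin⟩ := Finset.exists_min_image P (fun k => W k i / g₁ k) hPne
  have hksSw : ks ∈ Sw := (Finset.mem_filter.1 hksP).1
  have hgks : 0 < g₁ ks := (Finset.mem_filter.1 hksP).2
  set t := W ks i / g₁ ks with ht
  have htnn : 0 ≤ t := div_nonneg (hW ks i) hgks.le
  set α : Fin r → ℝ := fun k => W k i - t * g₁ k with hα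
  have hadm : Admissible A (fun j => M j i) (Sw.erase ks) := by
    refine ⟨α, fun k => ?_, fun k hk => ?_, fun j => ?_⟩
    · show 0 ≤ W k i - t * g₁ k
      by_cases hkP : k ∈ P
      · have hgk := (Finset.mem_filter.1 hkP).2
        have h1 := hksmin k hkP
        have h2 := (le_div_iff₀ hgk).1 h1
        linarith
      · have hgk : g₁ k ≤ 0 := by
          by_contra h
          push_neg at h
          by_cases hkSw : k ∈ Sw
          · exact hkP (Finset.mem_filter.2 ⟨hkSw, h⟩)
          · have hw : W k i = 0 := by
              by_contra hw
              exact hkSw (Finset.mem_filter.2 ⟨Finset.mem_univ _, hw⟩)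
            rw [hg₁supp k hw] at h; exact lt_irrefl _ h
        have h3 : t * g₁ k ≤ 0 := mul_nonpos_of_nonneg_of_nonpos htnn hgk
        linarith [hW k i]
    · show W k i - t * g₁ k = 0
      rw [Finset.mem_erase, not_and_or] at hk
      rcases hk with h | h
      · push_neg at h
        subst h
        show W k i - W k i / g₁ k * g₁ k = 0
        field_simp
        ring
      · have hw : W k i = 0 := by
          by_contra hw
          exact h (Finset.mem_filter.2 ⟨Finset.mem_univ _, hw⟩)
        rw [hw, hg₁supp k hw]
        ring
    · have hM : M j i = ∑ k : Fin r, W k i * A j k := by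
        rw [hfac]
        simp only [Matrix.mul_apply]
        exact Finset.sum_congr rfl fun k _ => mul_comm _ _
      show M j i = ∑ k : Fin r, α k * A j k
      have hterm : ∀ k, α k * A j k = W k i * A j k - t * (g₁ k * A j k) := by
        intro k; show (W k i - t * g₁ k) * A j k = _; ring
      simp_rw [hterm]
      rw [Finset.sum_sub_distrib, ← Finset.mul_sum, hg₁sum j, mul_zero, sub_zero, hM]
  have hne : Sw.erase ks ≠ Sw := (Finset.erase_ssubset hksSw).ne
  rcases hfirst.2 _ hadm hne with h | ⟨hcard, _⟩
  · exact absurd (Finset.card_erase_lt_of_mem hksSw) (by omega)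
  · exact absurd (Finset.card_erase_lt_of_mem hksSw) (by omega)

lemma sum_supported {r : ℕ} (Sw : Finset (Fin r)) (g : {x // x ∈ Sw} → ℝ) (f : Fin r → ℝ) :
    ∑ k : Fin r, (if h : k ∈ Sw then g ⟨k, h⟩ else 0) * f k
      = ∑ k : {x // x ∈ Sw}, g k * f k := by
  rw [← Finset.sum_subset (Finset.subset_univ Sw) (fun k _ hk => by simp [hk])]
  rw [Finset.univ_eq_attach, ← Finset.sum_attach Sw
    (fun k => (if h : k ∈ Sw then g ⟨k, h⟩ else 0) * f k)]
  exact Finset.sum_congr rfl fun k _ => by simp [k.2]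

lemma extend_sigma {m r s : ℕ} (A : Matrix (Fin m) (Fin r) ℝ) (hrank : A.rank = s)
    (Sw : Finset (Fin r))
    (hind : ∀ g : Fin r → ℝ, (∀ k, k ∉ Sw → g k = 0) →
      (∀ j, ∑ k : Fin r, g k * A j k = 0) → g = 0) :
    ∃ σ : Fin s → Fin r, Function.Injective σ ∧
      LinearIndependent ℝ (fun t : Fin s => fun j : Fin m => A j (σ t)) ∧
      ∀ k ∈ Sw, ∃ t, σ t = k := by
  have hfam : LinearIndependent ℝ (fun k : ↥Sw => Aᵀ (k : Fin r)) := by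
    rw [Fintype.linearIndependent_iff]
    intro g hg
    have hG := hind (fun k => if h : k ∈ Sw then g ⟨k, h⟩ else 0)
      (fun k hk => by simp [hk]) ?_
    · intro k
      have := congrFun hG k
      simpa [k.2] using this
    · intro j
      have h0 := congrFun hg j
      simp only [Finset.sum_apply, Pi.smul_apply, smul_eq_mul, Pi.zero_apply,
        Matrix.transpose_apply] at h0
      rw [sum_supported Sw g (fun k => A j k)]
      exact h0
  -- extend to a basis of the column space
  have hs₀ : LinearIndependent ℝ ((↑) : Set.range (fun k : ↥Sw => Aᵀ (k : Fin r)) → (Fin m → ℝ)) :=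
    hfam.linearIndepOn_id
  have hsub : Set.range (fun k : ↥Sw => Aᵀ (k : Fin r)) ⊆ Set.range Aᵀ := by
    rintro _ ⟨k, rfl⟩; exact ⟨k, rfl⟩
  obtain ⟨b, hbt, hs₀b, htspan, hbind⟩ := exists_linearIndepOn_id_extension hs₀ hsub
  have hbfin : b.Finite := (Set.finite_range Aᵀ).subset hbt
  haveI : Fintype b := hbfin.fintype
  have hspan_eq : Submodule.span ℝ b = Submodule.span ℝ (Set.range Aᵀ) :=
    le_antisymm (Submodule.span_mono hbt)
      (Submodule.span_le.2 (fun v hv => htspan hv))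
  have hcard : Fintype.card b = s := by
    have h1 := finrank_span_set_eq_card hbind
    rw [hspan_eq] at h1
    rw [← Set.toFinset_card, ← h1]; exact (Matrix.rank_eq_finrank_span_cols A).symm.trans hrank
  -- the equivalence Fin s ≃ b
  let e : Fin s ≃ b := (Fintype.equivFinOfCardEq hcard).symm
  -- pick an index for each basis element, preferring indices in Sw
  let pick : b → Fin r := fun v =>
    if h : ∃ k ∈ Sw, Aᵀ k = (v : Fin m → ℝ) then h.choose else (hbt v.2).choose
  have hpick : ∀ v : b, Aᵀ (pick v) = (v : Fin m → ℝ) := by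
    intro v
    show Aᵀ (dite _ _ _) = _
    split
    · next h => exact h.choose_spec.2
    · exact (hbt v.2).choose_spec
  have hpickSw : ∀ (k : Fin r), (hk : k ∈ Sw) →
      (hb : Aᵀ k ∈ b) → pick ⟨Aᵀ k, hb⟩ = k := by
    intro k hk hb
    have hex : ∃ k' ∈ Sw, Aᵀ k' = ((⟨Aᵀ k, hb⟩ : b) : Fin m → ℝ) := ⟨k, hk, rfl⟩
    have : pick ⟨Aᵀ k, hb⟩ = hex.choose := dif_pos hex
    rw [this]
    have hspec := hex.choose_spec
    -- injectivity of the family on Sw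
    have hinj : Function.Injective (fun k : ↥Sw => Aᵀ (k : Fin r)) := hfam.injective
    have := hinj (a₁ := ⟨hex.choose, hspec.1⟩) (a₂ := ⟨k, hk⟩) hspec.2
    exact congrArg Subtype.val this
  refine ⟨fun t => pick (e t), ?_, ?_, ?_⟩
  · intro t₁ t₂ h
    simp only at h
    have : (e t₁ : Fin m → ℝ) = (e t₂ : Fin m → ℝ) := by
      rw [← hpick (e t₁), ← hpick (e t₂), h]
    exact e.injective (Subtype.ext this)
  · have : (fun t : Fin s => fun j : Fin m => A j (pick (e t)))
        = (fun t : Fin s => ((e t : b) : Fin m → ℝ)) := by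
      funext t
      rw [← hpick (e t)]
      rfl
    rw [this]
    exact LinearIndependent.comp hbind e e.injective
  · intro k hk
    have hb : Aᵀ k ∈ b := hs₀b ⟨⟨k, hk⟩, rfl⟩
    refine ⟨e.symm ⟨Aᵀ k, hb⟩, ?_⟩
    show pick (e (e.symm ⟨Aᵀ k, hb⟩)) = k
    rw [e.apply_symm_apply]
    exact hpickSw k hk hb

/-- for a stable factorization, among all entrywise nonnegative vectors of
the form B_S Mᵢ^U, the column Wᵢ is the unique one with support minimal in the order
(cardinality first, then lexicographic). -/
theorem stmt_10 {m n r s : ℕ} (M : Matrix (Fin m) (Fin n) ℝ)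
    (A : Matrix (Fin m) (Fin r) ℝ) (W : Matrix (Fin r) (Fin n) ℝ)
    (hA : ∀ i k, 0 ≤ A i k) (hW : ∀ k j, 0 ≤ W k j) (hfac : M = A * W)
    (hstable : Stable M A W) (hrank : A.rank = s)
    (U : Fin s → Fin m) (hU : Function.Injective U)
    (hUindep : LinearIndependent ℝ (fun u : Fin s => fun k : Fin r => A (U u) k))
    (i : Fin n) :
    -- Wᵢ is itself of the form B_S Mᵢ^U for some set S of s linearly independent columns
    (∃ σ : Fin s → Fin r, Function.Injective σ ∧
      LinearIndependent ℝ (fun t : Fin s => fun j : Fin m => A j (σ t)) ∧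
      (∀ k : Fin r, (∀ t : Fin s, σ t ≠ k) → W k i = 0) ∧
      ∀ t : Fin s,
        W (σ t) i = ((A.submatrix U σ)⁻¹).mulVec (fun u : Fin s => M (U u) i) t) ∧
    -- and any other nonnegative vector of this form has lexicographically later support
    ∀ v : Fin r → ℝ,
      (∃ σ : Fin s → Fin r, Function.Injective σ ∧
        LinearIndependent ℝ (fun t : Fin s => fun j : Fin m => A j (σ t)) ∧
        (∀ k : Fin r, (∀ t : Fin s, σ t ≠ k) → v k = 0) ∧
        ∀ t : Fin s,
          v (σ t) = ((A.submatrix U σ)⁻¹).mulVec (fun u : Fin s => M (U u) i) t) →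
      (∀ k, 0 ≤ v k) → v ≠ (fun k => W k i) →
      SubsetLt (Finset.univ.filter fun k => W k i ≠ 0)
        (Finset.univ.filter fun k => v k ≠ 0) := by
  obtain ⟨S₀, hS₀⟩ := hstable.1 i
  set Sw := Finset.univ.filter fun k => W k i ≠ 0 with hSwdef
  have hfirst : IsFirstAdmissible A (fun j => M j i) Sw := supp_first hW hfac hS₀
  have hindfun : ∀ g : Fin r → ℝ, (∀ k, k ∉ Sw → g k = 0) →
      (∀ j, ∑ k : Fin r, g k * A j k = 0) → g = 0 := by
    intro g hg hsum
    refine supp_indep hW hfac hfirst g (fun k hk => hg k ?_) hsum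
    simp [hSwdef, hk]
  obtain ⟨σ, hσinj, hσind, hσcov⟩ := extend_sigma A hrank Sw hindfun
  have hWsupp : ∀ k : Fin r, (∀ t : Fin s, σ t ≠ k) → W k i = 0 := by
    intro k hk
    by_contra hw
    obtain ⟨t, ht⟩ := hσcov k (Finset.mem_filter.2 ⟨Finset.mem_univ _, hw⟩)
    exact hk t ht
  have hdet := det_sub_unit A hrank U hUindep σ hσind
  -- the linear system satisfied by W restricted to σ
  have hBW : (A.submatrix U σ).mulVec (fun t => W (σ t) i) = fun u => M (U u) i := by
    funext u
    show ∑ t, A (U u) (σ t) * W (σ t) i = M (U u) i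
    rw [← sum_inj_supp σ hσinj (fun k => A (U u) k) (fun k => W k i) hWsupp]
    rw [hfac]
    simp [Matrix.mul_apply]
  have hWform : ∀ t : Fin s,
      W (σ t) i = ((A.submatrix U σ)⁻¹).mulVec (fun u : Fin s => M (U u) i) t := by
    intro t
    conv_rhs => rw [← hBW]
    rw [Matrix.mulVec_mulVec, Matrix.nonsing_inv_mul _ hdet, Matrix.one_mulVec]
  refine ⟨⟨σ, hσinj, hσind, hWsupp, hWform⟩, ?_⟩
  -- uniqueness / minimality part
  intro v ⟨σ', hσ'inj, hσ'ind, hvsupp, hvform⟩ hvnn hvne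
  have hdet' := det_sub_unit A hrank U hUindep σ' hσ'ind
  have hBv : (A.submatrix U σ').mulVec (fun t => v (σ' t)) = fun u => M (U u) i := by
    have h1 : (fun t => v (σ' t)) =
        ((A.submatrix U σ')⁻¹).mulVec (fun u : Fin s => M (U u) i) := funext hvform
    rw [h1, Matrix.mulVec_mulVec, Matrix.mul_nonsing_inv _ hdet', Matrix.one_mulVec]
  have hvU : ∀ u, ∑ k : Fin r, A (U u) k * v k = M (U u) i := by
    intro u
    rw [sum_inj_supp σ' hσ'inj (fun k => A (U u) k) v hvsupp]
    exact congrFun hBv u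
  have hWU : ∀ u, ∑ k : Fin r, A (U u) k * W k i = M (U u) i := by
    intro u
    rw [hfac]
    simp [Matrix.mul_apply]
  have hdiff : ∀ j, ∑ k : Fin r, A j k * (v k - W k i) = 0 := by
    apply rowU_span A hrank U hUindep
    intro u
    simp_rw [mul_sub, Finset.sum_sub_distrib, hvU u, hWU u, sub_self]
  by_cases hTv : (Finset.univ.filter fun k => v k ≠ 0) = Sw
  · exfalso
    apply hvne
    have hg : (fun k => v k - W k i) = 0 := by
      refine supp_indep hW hfac hfirst _ (fun k hk => ?_) (fun j => ?_)
      · have hkSw : k ∉ Sw := by simp [hSwdef, hk]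
        rw [← hTv] at hkSw
        have hv0 : v k = 0 := by
          by_contra hv
          exact hkSw (Finset.mem_filter.2 ⟨Finset.mem_univ _, hv⟩)
        rw [hv0, hk, sub_zero]
      · rw [← hdiff j]
        exact Finset.sum_congr rfl fun k _ => mul_comm _ _
    funext k
    have := congrFun hg k
    simpa [sub_eq_zero] using this
  · have hvadm : Admissible A (fun j => M j i) (Finset.univ.filter fun k => v k ≠ 0) := by
      refine ⟨v, hvnn, fun k hk => ?_, fun j => ?_⟩
      · by_contra h
        exact hk (Finset.mem_filter.2 ⟨Finset.mem_univ _, h⟩)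
      · show M j i = ∑ k : Fin r, v k * A j k
        have hWM : ∑ k : Fin r, A j k * W k i = M j i := by
          rw [hfac]; simp [Matrix.mul_apply]
        have h2 := hdiff j
        simp_rw [mul_sub, Finset.sum_sub_distrib, sub_eq_zero] at h2
        rw [← hWM, ← h2]
        exact Finset.sum_congr rfl fun k _ => mul_comm _ _
    exact hfirst.2 _ hvadm hTv
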